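/- Let Ω and A be countable types, let m₁ ≤ m₂ be σ-algebras on Ω, let μ₁ be a probability measure with respect to m₁ and μ₂ a probability measure with respect to m₂ such that (m₂, μ₂) extends (m₁, μ₁). Let μ be a discrete probability distribution on A and κ₁ : A → (probability measures with respect to m₁) a family with μ₁ = bind(μ, κ₁). Then there exists a family κ₂ : A → (probability measures with respect to m₂) such that μ₂ = bind(μ, κ₂) and, for every a in the support of μ, (m₂, κ₂(a)) extends (m₁, κ₁(a)). -/

import Mathlib

open MeasureTheory

namespace BindExtendAux

variable {Ω : Type*} [Countable Ω]

lemma mem_atom_iff [m : MeasurableSpace Ω] {x y : Ω} :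
    y ∈ measurableAtom x ↔ ∀ s : Set Ω, x ∈ s → MeasurableSet s → y ∈ s := by
  simp [measurableAtom, Set.mem_iInter]

lemma atom_symm [m : MeasurableSpace Ω] {x y : Ω} (h : y ∈ measurableAtom x) :
    x ∈ measurableAtom y := by
  rw [mem_atom_iff]
  intro s hys hs
  by_contra hx
  exact (mem_of_mem_measurableAtom h hs.compl hx) hys

lemma atom_eq [m : MeasurableSpace Ω] {x y : Ω} (h : y ∈ measurableAtom x) :
    measurableAtom y = measurableAtom x := by
  have h' := atom_symm h
  apply Set.Subset.antisymm <;> intro z hz <;> rw [mem_atom_iff] at * <;>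
      intro s hxs hs
  · exact hz s (h s hxs hs) hs
  · exact hz s (h' s hxs hs) hs

/-- Decomposition of a measure over the atoms of a coarser σ-algebra. -/
lemma decomp {m m' : MeasurableSpace Ω} (hm : m ≤ m')
    (ρ : @Measure Ω m') {E : Set Ω} (hE : MeasurableSet[m'] E) :
    ρ E = ∑' B : Set.range (@measurableAtom Ω m), ρ (E ∩ B) := by
  haveI : Countable (Set.range (@measurableAtom Ω m)) :=
    (Set.countable_range _).to_subtype
  have hcover : E = ⋃ B : Set.range (@measurableAtom Ω m), E ∩ (B : Set Ω) := by
    ext ω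
    simp only [Set.mem_iUnion, Set.mem_inter_iff]
    constructor
    · intro hω
      exact ⟨⟨@measurableAtom Ω m ω, ⟨ω, rfl⟩⟩, hω, @mem_measurableAtom_self Ω m ω⟩
    · rintro ⟨B, hω, -⟩
      exact hω
  have hdisj : Pairwise (Function.onFun Disjoint
      fun B : Set.range (@measurableAtom Ω m) => E ∩ (B : Set Ω)) := by
    rintro ⟨B, x, rfl⟩ ⟨B', y, rfl⟩ hne
    rw [Function.onFun, Set.disjoint_left]
    rintro ω ⟨-, hωB⟩ ⟨-, hωB'⟩
    exact hne (by
      apply Subtype.ext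
      show @measurableAtom Ω m x = @measurableAtom Ω m y
      rw [← @atom_eq Ω _ m x ω hωB, ← @atom_eq Ω _ m y ω hωB'])
  have hmeas : ∀ B : Set.range (@measurableAtom Ω m),
      MeasurableSet[m'] (E ∩ (B : Set Ω)) := by
    rintro ⟨B, x, rfl⟩
    exact hE.inter (hm _ (@MeasurableSet.measurableAtom_of_countable Ω m _ x))
  conv_lhs => rw [hcover]
  exact measure_iUnion hdisj hmeas

end BindExtendAux


/-- If `(m₂, μ₂)` extends `(m₁, μ₁)` and `μ₁` is the convex combination `bind(μ, κ₁)` of a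
family `κ₁` of probability measures on `m₁` along a PMF `μ`, then there is a family `κ₂` of
probability measures on `m₂` with `μ₂ = bind(μ, κ₂)` and, for every `a` in the support of `μ`,
`(m₂, κ₂ a)` extends `(m₁, κ₁ a)`. -/
theorem bind_extend
    {Ω A : Type*} [Countable Ω] [Countable A]
    (m₁ m₂ : MeasurableSpace Ω) (hle : m₁ ≤ m₂)
    (μ₁ : @Measure Ω m₁) (μ₂ : @Measure Ω m₂)
    (hp₁ : @IsProbabilityMeasure Ω m₁ μ₁) (hp₂ : @IsProbabilityMeasure Ω m₂ μ₂)
    (hext : ∀ E : Set Ω, MeasurableSet[m₁] E → μ₁ E = μ₂ E)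
    (μ : PMF A) (κ₁ : A → @Measure Ω m₁)
    (hκ₁ : ∀ a, @IsProbabilityMeasure Ω m₁ (κ₁ a))
    (hbind : ∀ E : Set Ω, MeasurableSet[m₁] E → μ₁ E = ∑' a, μ a * κ₁ a E) :
    ∃ κ₂ : A → @Measure Ω m₂,
      (∀ a, @IsProbabilityMeasure Ω m₂ (κ₂ a)) ∧
      (∀ E : Set Ω, MeasurableSet[m₂] E → μ₂ E = ∑' a, μ a * κ₂ a E) ∧
      (∀ a ∈ μ.support, ∀ E : Set Ω, MeasurableSet[m₁] E → κ₁ a E = κ₂ a E) := by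
  classical
  set T := Set.range (@measurableAtom Ω m₁) with hT
  haveI : Countable T := (Set.countable_range _).to_subtype
  have hBmeas₁ : ∀ B : T, MeasurableSet[m₁] (B : Set Ω) := by
    rintro ⟨B, x, rfl⟩
    exact @MeasurableSet.measurableAtom_of_countable Ω m₁ _ x
  have hBmeas₂ : ∀ B : T, MeasurableSet[m₂] (B : Set Ω) := fun B => hle _ (hBmeas₁ B)
  -- null atoms for μ₂ are null for κ₁ a when a is in the support
  have hnull : ∀ a ∈ μ.support, ∀ B : T, μ₂ B = 0 → κ₁ a (B : Set Ω) = 0 := by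
    intro a ha B h0
    have h1 : μ₁ B = 0 := by rw [hext _ (hBmeas₁ B)]; exact h0
    rw [hbind _ (hBmeas₁ B)] at h1
    have h2 := ENNReal.tsum_eq_zero.mp h1 a
    rcases mul_eq_zero.mp h2 with h | h
    · exact absurd h (μ.mem_support_iff a |>.mp ha)
    · exact h
  -- the key cancellation
  have hterm : ∀ a ∈ μ.support, ∀ B : T,
      κ₁ a (B : Set Ω) / μ₂ B * μ₂ B = κ₁ a (B : Set Ω) := by
    intro a ha B
    by_cases h0 : μ₂ B = 0
    · rw [h0, mul_zero, hnull a ha B h0]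
    · exact ENNReal.div_mul_cancel h0 (measure_ne_top μ₂ _)
  -- the conditional mixture
  set ν : A → @Measure Ω m₂ := fun a =>
    @Measure.sum Ω T m₂ (fun B => (κ₁ a (B : Set Ω) / μ₂ B) • (@Measure.restrict Ω m₂ μ₂ B))
    with hν
  have hνapply : ∀ a, ∀ E : Set Ω, MeasurableSet[m₂] E →
      ν a E = ∑' B : T, κ₁ a (B : Set Ω) / μ₂ B * μ₂ (E ∩ B) := by
    intro a E hE
    rw [hν]
    rw [Measure.sum_apply _ hE]
    refine tsum_congr fun B => ?_
    rw [Measure.smul_apply, Measure.restrict_apply hE, smul_eq_mul]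
  -- for a in the support, ν a extends κ₁ a
  have hextend : ∀ a ∈ μ.support, ∀ E : Set Ω, MeasurableSet[m₁] E → κ₁ a E = ν a E := by
    intro a ha E hE
    rw [hνapply a E (hle _ hE), BindExtendAux.decomp (le_refl m₁) (κ₁ a) hE]
    refine tsum_congr fun B => ?_
    by_cases hx : ∃ ω ∈ (B : Set Ω), ω ∈ E
    · obtain ⟨ω, hωB, hωE⟩ := hx
      have hBE : (B : Set Ω) ⊆ E := by
        obtain ⟨s, x, hsx⟩ := B
        simp only at hωB ⊢
        rw [← hsx] at hωB ⊢
        rw [← @BindExtendAux.atom_eq Ω _ m₁ x ω hωB]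
        exact @measurableAtom_subset Ω m₁ E ω hE hωE
      rw [Set.inter_eq_self_of_subset_right hBE, hterm a ha B]
    · push_neg at hx
      have : E ∩ (B : Set Ω) = ∅ := by
        ext ω; simp only [Set.mem_inter_iff, Set.mem_empty_iff_false, iff_false]
        rintro ⟨h1, h2⟩; exact hx ω h2 h1
      rw [this, measure_empty, measure_empty, mul_zero]
  -- ν a is a probability measure for a in the support
  have hνprob : ∀ a ∈ μ.support, @IsProbabilityMeasure Ω m₂ (ν a) := by
    intro a ha
    constructor
    rw [← hextend a ha Set.univ MeasurableSet.univ]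
    exact (hκ₁ a).measure_univ
  -- the final family
  refine ⟨fun a => if a ∈ μ.support then ν a else μ₂, ?_, ?_, ?_⟩
  · intro a
    by_cases ha : a ∈ μ.support
    · simpa [ha] using hνprob a ha
    · simpa [ha] using hp₂
  · intro E hE
    have step1 : ∀ a : A,
        μ a * (if a ∈ μ.support then ν a else μ₂) E
          = ∑' B : T, μ a * κ₁ a (B : Set Ω) * (μ₂ (E ∩ B) / μ₂ B) := by
      intro a
      by_cases ha : a ∈ μ.support
      · rw [if_pos ha, hνapply a E hE, ← ENNReal.tsum_mul_left]
        refine tsum_congr fun B => ?_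
        rw [ENNReal.div_eq_inv_mul, ENNReal.div_eq_inv_mul]
        ring
      · have : μ a = 0 := by
          by_contra h; exact ha (μ.mem_support_iff a |>.mpr h)
        simp [this]
    calc μ₂ E = ∑' B : T, μ₂ (E ∩ B) := BindExtendAux.decomp hle μ₂ hE
      _ = ∑' B : T, (∑' a : A, μ a * κ₁ a (B : Set Ω)) * (μ₂ (E ∩ B) / μ₂ B) := by
          refine tsum_congr fun B => ?_
          rw [← hbind _ (hBmeas₁ B), hext _ (hBmeas₁ B)]
          by_cases h0 : μ₂ B = 0
          · have : μ₂ (E ∩ (B : Set Ω)) = 0 :=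
              le_antisymm (h0 ▸ measure_mono Set.inter_subset_right) zero_le
            rw [this, h0, zero_mul]
          · rw [mul_comm, ENNReal.div_mul_cancel h0 (measure_ne_top μ₂ _)]
      _ = ∑' B : T, ∑' a : A, μ a * κ₁ a (B : Set Ω) * (μ₂ (E ∩ B) / μ₂ B) := by
          refine tsum_congr fun B => ?_
          rw [ENNReal.tsum_mul_right]
      _ = ∑' a : A, ∑' B : T, μ a * κ₁ a (B : Set Ω) * (μ₂ (E ∩ B) / μ₂ B) :=
          ENNReal.tsum_comm
      _ = ∑' a : A, μ a * (if a ∈ μ.support then ν a else μ₂) E := by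
          refine tsum_congr fun a => (step1 a).symm
  · intro a ha E hE
    show κ₁ a E = (if a ∈ μ.support then ν a else μ₂) E
    rw [if_pos ha]
    exact hextend a ha E hE
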